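/- arXiv:2211.04366 — 2 statements merged into one kernel-verified Lean document; each statement's English description precedes it below -/
import Mathlib

section
/- Let W be a dual Banach space and X ⊆ Y subspaces of W such that both X and Y admit Lebesgue decompositions relative to W. If φ ∈ SG_W(X) is a singular functional on X and ψ ∈ Y* is a Hahn–Banach (norm-preserving) extension of φ to Y, then ψ ∈ SG_W(Y). -/
open NormedSpace Filter Topology

def WeakStarContinuous {V : Type*} [NormedAddCommGroup V] [NormedSpace ℂ V]
    (Φ : StrongDual ℂ V → ℂ) : Prop :=
  Continuous fun w : WeakDual ℂ V => Φ (WeakDual.toStrongDual w)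

def ACset {V : Type*} [NormedAddCommGroup V] [NormedSpace ℂ V]
    (X : @Subspace ℂ (StrongDual ℂ V) _ _ NormedSpace.toModule) : Set (StrongDual ℂ ↥X) :=
  {φ | ∃ Φ : StrongDual ℂ V →ₗ[ℂ] ℂ, WeakStarContinuous Φ ∧ ∀ x : ↥X, Φ (x : StrongDual ℂ V) = φ x}

def IsLebesgueDecomposition {V : Type*} [NormedAddCommGroup V] [NormedSpace ℂ V]
    (X : @Subspace ℂ (StrongDual ℂ V) _ _ NormedSpace.toModule) (L : StrongDual ℂ ↥X →L[ℂ] StrongDual ℂ ↥X) : Prop :=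
  (∀ φ, L (L φ) = L φ) ∧ Set.range L = ACset X ∧
    ∀ φ : StrongDual ℂ ↥X, ‖φ‖ = ‖L φ‖ + ‖φ - L φ‖

/-- The continuous inclusion of `X` into `Y` for nested subspaces. -/
noncomputable def inclCLM {V : Type*} [NormedAddCommGroup V] [NormedSpace ℂ V]
    {X Y : @Subspace ℂ (StrongDual ℂ V) _ _ NormedSpace.toModule} (h : X ≤ Y) : ↥X →L[ℂ] ↥Y :=
  LinearMap.mkContinuous (Submodule.inclusion h) 1 (fun x => by
    rw [one_mul]; exact le_of_eq rfl)

set_option maxHeartbeats 1000000 in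
/-- a Hahn–Banach (norm-preserving) extension of a singular functional on `X`
to `Y` is singular on `Y`. -/
theorem stmt2 {V : Type*} [NormedAddCommGroup V] [NormedSpace ℂ V]
    {X Y : @Subspace ℂ (StrongDual ℂ V) _ _ NormedSpace.toModule} (hXY : X ≤ Y)
    (LX : StrongDual ℂ ↥X →L[ℂ] StrongDual ℂ ↥X) (LY : StrongDual ℂ ↥Y →L[ℂ] StrongDual ℂ ↥Y)
    (hLX : IsLebesgueDecomposition X LX) (hLY : IsLebesgueDecomposition Y LY)
    (φ : StrongDual ℂ ↥X) (hφ : LX φ = 0)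
    (ψ : StrongDual ℂ ↥Y) (hext : ∀ x : ↥X, ψ (inclCLM hXY x) = φ x)
    (hnorm : ‖ψ‖ = ‖φ‖) :
    LY ψ = 0 := by
  obtain ⟨hLXidem, hLXrange, hLXnorm⟩ := hLX
  obtain ⟨hLYidem, hLYrange, hLYnorm⟩ := hLY
  set ι := inclCLM hXY with hι
  have hιnorm : ‖ι‖ ≤ 1 := LinearMap.mkContinuous_norm_le _ zero_le_one _
  have hres : ∀ θ : StrongDual ℂ ↥Y, ‖θ.comp ι‖ ≤ ‖θ‖ := fun θ => by
    calc ‖θ.comp ι‖ ≤ ‖θ‖ * ‖ι‖ := ContinuousLinearMap.opNorm_comp_le _ _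
    _ ≤ ‖θ‖ * 1 := by gcongr
    _ = ‖θ‖ := mul_one _
  have hφ_eq : ψ.comp ι = φ := ContinuousLinearMap.ext hext
  set a := (LY ψ).comp ι with ha
  have ha_AC : a ∈ ACset X := by
    have hmem : LY ψ ∈ ACset Y := hLYrange ▸ ⟨ψ, rfl⟩
    obtain ⟨Φ, hΦc, hΦe⟩ := hmem
    refine ⟨Φ, hΦc, fun x => ?_⟩
    have := hΦe (ι x)
    simpa [ha, hι, inclCLM] using this
  have hLXa : LX a = a := by
    rw [← hLXrange] at ha_AC
    obtain ⟨g, hg⟩ := ha_AC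
    rw [← hg, hLXidem]
  set s := φ - a with hs
  have hLXs : LX s = -a := by rw [hs, map_sub, hφ, hLXa, zero_sub]
  have h1 : ‖s‖ = ‖a‖ + ‖φ‖ := by
    have h := hLXnorm s
    rw [hLXs, ContinuousLinearMap.opNorm_neg] at h
    have : s - -a = φ := by rw [hs]; abel
    rw [this] at h
    exact h
  have hs_le : ‖s‖ ≤ ‖ψ - LY ψ‖ := by
    have h2 : s = (ψ - LY ψ).comp ι := by
      rw [ContinuousLinearMap.sub_comp, hφ_eq, hs, ha]
    rw [h2]; exact hres _
  have hnorms : ‖ψ‖ = ‖LY ψ‖ + ‖ψ - LY ψ‖ := hLYnorm ψ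
  have hLY0 : ‖LY ψ‖ ≤ 0 := by
    have h3 : ‖a‖ ≥ 0 := norm_nonneg a
    linarith
  have : ‖LY ψ‖ = 0 := le_antisymm hLY0 (ContinuousLinearMap.opNorm_nonneg _)
  exact (ContinuousLinearMap.opNorm_zero_iff _).mp this
end

section
/- Let W be a dual Banach space and X ⊆ Y subspaces of W. If X and Y admit compatible Lebesgue decompositions relative to W, then the inclusion X ⊆ Y has the Gleason–Whitney property relative to W: whenever φ ∈ AC_W(X) and ψ ∈ Y* is a norm-preserving extension of φ, then ψ ∈ AC_W(Y). -/
set_option maxHeartbeats 1000000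


open NormedSpace Filter Topology

/-- if `X ⊆ Y` admit compatible Lebesgue decompositions relative to `W`,
then the inclusion has the Gleason–Whitney property: every norm-preserving extension to
`Y` of an absolutely continuous functional on `X` is absolutely continuous on `Y`. -/
theorem stmt8 {V : Type*} [NormedAddCommGroup V] [NormedSpace ℂ V]
    {X Y : @Subspace ℂ (StrongDual ℂ V) _ _ NormedSpace.toModule} (hXY : X ≤ Y)
    (LX : StrongDual ℂ ↥X →L[ℂ] StrongDual ℂ ↥X) (LY : StrongDual ℂ ↥Y →L[ℂ] StrongDual ℂ ↥Y)
    (hLX : IsLebesgueDecomposition X LX) (hLY : IsLebesgueDecomposition Y LY)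
    (hcompat : ∀ ψ : StrongDual ℂ ↥Y,
      LX (ψ.comp (inclCLM hXY)) = (LY ψ).comp (inclCLM hXY) ∧
      ψ.comp (inclCLM hXY) - LX (ψ.comp (inclCLM hXY))
        = (ψ - LY ψ).comp (inclCLM hXY)) :
    ∀ φ ∈ ACset X, ∀ ψ : StrongDual ℂ ↥Y,
      (∀ x : ↥X, ψ (inclCLM hXY x) = φ x) → ‖ψ‖ = ‖φ‖ → ψ ∈ ACset Y := by
  intro φ hφ ψ hext hnorm
  obtain ⟨hPX, hRX, hNX⟩ := hLX
  obtain ⟨hPY, hRY, hNY⟩ := hLY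
  have hψφ : ψ.comp (inclCLM hXY) = φ := by
    ext x; exact hext x
  have hφmem : φ ∈ Set.range LX := hRX.symm ▸ hφ
  obtain ⟨χ, hχ⟩ := hφmem
  have hφfix : LX φ = φ := by rw [← hχ, hPX]
  have h1 := (hcompat ψ).1
  rw [hψφ, hφfix] at h1
  have hinorm : ‖inclCLM hXY‖ ≤ 1 :=
    LinearMap.mkContinuous_norm_le _ zero_le_one _
  have hle : ‖φ‖ ≤ ‖LY ψ‖ := by
    calc ‖φ‖ = ‖(LY ψ).comp (inclCLM hXY)‖ := by rw [h1]
    _ ≤ ‖LY ψ‖ * ‖inclCLM hXY‖ := ContinuousLinearMap.opNorm_comp_le _ _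
    _ ≤ ‖LY ψ‖ * 1 := by
        exact mul_le_mul_of_nonneg_left hinorm (ContinuousLinearMap.opNorm_nonneg _)
    _ = ‖LY ψ‖ := mul_one _
  have hzero : ‖ψ - LY ψ‖ = 0 := by
    have := hNY ψ
    rw [hnorm] at this
    linarith [norm_nonneg (ψ - LY ψ)]
  have hfix : LY ψ = ψ := by
    have : ψ - LY ψ = 0 := (ContinuousLinearMap.opNorm_zero_iff (ψ - LY ψ)).mp hzero
    exact (sub_eq_zero.mp this).symm
  rw [← hRY]
  exact ⟨ψ, hfix⟩
end
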